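/- Let F be a distribution on [0,∞) such that the function v ↦ v(1−F(v))/F(v) is nonincreasing (the 'inscribed triangle property'). Then the expected revenue of the two-agent Vickrey auction with two i.i.d. values from F (i.e., E[min(v₁,v₂)]) is at least the optimal single-agent revenue sup_p p(1−F(p)). -/

import Mathlib

open MeasureTheory Set

/-- If the distribution `F` on `[0,∞)` satisfies the inscribed triangle
property — `v ↦ v(1-F(v))/F(v)` is nonincreasing — then the expected revenue
of the two-agent Vickrey auction with two i.i.d. values from `F`, namely
`E[min(v₁,v₂)]`, is at least the optimal single-agent revenue
`sup_p p(1-F(p))`. -/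
theorem vickrey_beats_monopoly_of_inscribed_triangle
    (μ : Measure ℝ) [IsProbabilityMeasure μ] (F : ℝ → ℝ)
    (hcdf : ∀ v, (μ (Iic v)).toReal = F v)
    (hsupp : ∀ v < (0:ℝ), F v = 0)
    (hIT : AntitoneOn (fun v => v * (1 - F v) / F v) {v | 0 < v ∧ 0 < F v})
    (hint : Integrable (fun p : ℝ × ℝ => min p.1 p.2) (μ.prod μ)) :
    ∀ p : ℝ, p * (1 - F p) ≤ ∫ w, min w.1 w.2 ∂(μ.prod μ) := by
  intro p
  -- basic facts about F
  have hF0le : ∀ v, 0 ≤ F v := fun v => (hcdf v) ▸ ENNReal.toReal_nonneg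
  have hFle1 : ∀ v, F v ≤ 1 := by
    intro v
    have h := ENNReal.toReal_mono ENNReal.one_ne_top (prob_le_one (μ := μ) (s := Iic v))
    rw [hcdf v, ENNReal.toReal_one] at h
    exact h
  have hFmono : Monotone F := by
    intro a b hab
    rw [← hcdf a, ← hcdf b]
    exact ENNReal.toReal_mono (measure_ne_top μ _) (measure_mono (Iic_subset_Iic.2 hab))
  have hIoi : ∀ x : ℝ, (μ (Ioi x)).toReal = 1 - F x := by
    intro x
    rw [← compl_Iic, measure_compl measurableSet_Iic (measure_ne_top μ _), measure_univ,
        ENNReal.toReal_sub_of_le prob_le_one ENNReal.one_ne_top, ENNReal.toReal_one, hcdf]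
  -- support in [0, ∞)
  have hIic0 : ∀ v : ℝ, v < 0 → μ (Iic v) = 0 := by
    intro v hv
    have h := hsupp v hv
    rw [← hcdf v] at h
    rcases (ENNReal.toReal_eq_zero_iff _).1 h with h' | h'
    · exact h'
    · exact absurd h' (measure_ne_top μ _)
  have hIio0 : μ (Iio (0:ℝ)) = 0 := by
    have hsub : Iio (0:ℝ) ⊆ ⋃ n : ℕ, Iic (-(1:ℝ)/(n+1)) := by
      intro x hx
      have hx' : x < 0 := hx
      obtain ⟨n, hn⟩ := exists_nat_one_div_lt (neg_pos.2 hx')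
      refine mem_iUnion.2 ⟨n, ?_⟩
      simp only [mem_Iic]
      have h2 : -(1:ℝ)/((n:ℝ)+1) = -((1:ℝ)/((n:ℝ)+1)) := by ring
      rw [h2]
      linarith
    refine measure_mono_null hsub (measure_iUnion_null fun n => hIic0 _ ?_)
    have hpos : (0:ℝ) < (n:ℝ)+1 := by positivity
    exact div_neg_of_neg_of_pos (by norm_num) hpos
  have hxae : ∀ᵐ x ∂μ, 0 ≤ x := by
    rw [ae_iff]
    have : {x : ℝ | ¬ 0 ≤ x} = Iio 0 := by ext x; simp [not_le]
    rw [this]; exact hIio0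
  have hzae : ∀ᵐ z ∂(μ.prod μ), 0 ≤ z.1 ∧ 0 ≤ z.2 := by
    rw [ae_iff]
    have hset : {z : ℝ×ℝ | ¬ (0 ≤ z.1 ∧ 0 ≤ z.2)} ⊆ (Iio 0 ×ˢ univ) ∪ (univ ×ˢ Iio 0) := by
      intro z hz
      simp only [mem_setOf_eq, not_and_or, not_le] at hz
      rcases hz with h | h
      · exact Or.inl ⟨h, trivial⟩
      · exact Or.inr ⟨trivial, h⟩
    refine measure_mono_null hset (measure_union_null ?_ ?_)
    · rw [Measure.prod_prod, hIio0, zero_mul]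
    · rw [Measure.prod_prod, hIio0, mul_zero]
  rcases le_or_gt (p * (1 - F p)) 0 with hple | hppos
  · -- trivial case: optimal revenue nonpositive
    refine hple.trans (integral_nonneg_of_ae ?_)
    filter_upwards [hzae] with z hz
    exact le_min hz.1 hz.2
  · have hp : 0 < p := by
      by_contra h
      push_neg at h
      nlinarith [mul_nonneg (neg_nonneg.2 h) (sub_nonneg.2 (hFle1 p))]
    have hFp1 : F p < 1 := by nlinarith
    rcases eq_or_lt_of_le (hF0le p) with hFp0 | hFp
    · -- F p = 0 : a.e. both values exceed p
      have hμp : μ (Iic p) = 0 := by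
        have h := hcdf p
        rw [← hFp0] at h
        rcases (ENNReal.toReal_eq_zero_iff _).1 h with h' | h'
        · exact h'
        · exact absurd h' (measure_ne_top μ _)
      have hae2 : ∀ᵐ z ∂(μ.prod μ), p ≤ min z.1 z.2 := by
        rw [ae_iff]
        have hset : {z : ℝ×ℝ | ¬ p ≤ min z.1 z.2} ⊆ (Iic p ×ˢ univ) ∪ (univ ×ˢ Iic p) := by
          intro z hz
          have hz' : min z.1 z.2 < p := not_le.1 hz
          rcases min_lt_iff.1 hz' with h | h
          · exact Or.inl ⟨le_of_lt h, mem_univ _⟩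
          · exact Or.inr ⟨mem_univ _, le_of_lt h⟩
        refine measure_mono_null hset (measure_union_null ?_ ?_)
        · rw [Measure.prod_prod, hμp, zero_mul]
        · rw [Measure.prod_prod, hμp, mul_zero]
      calc p * (1 - F p) ≤ p := by nlinarith [hF0le p]
        _ = ∫ _z : ℝ×ℝ, p ∂(μ.prod μ) := by simp
        _ ≤ ∫ z, min z.1 z.2 ∂(μ.prod μ) := integral_mono_ae (integrable_const p) hint hae2
    · -- main case : 0 < F p
      set c := p * (1 - F p) / F p with hc
      have hcpos : 0 < c := div_pos (mul_pos hp (by linarith)) hFp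
      -- F 0 = 0
      have hF00 : F 0 = 0 := by
        by_contra h0
        have hF0pos : 0 < F 0 := lt_of_le_of_ne (hF0le 0) (Ne.symm h0)
        set v := min p (c * F 0 / 2) with hv
        have hv0 : 0 < v := lt_min hp (by positivity)
        have hvp : v ≤ p := min_le_left _ _
        have hFv : 0 < F v := lt_of_lt_of_le hF0pos (hFmono hv0.le)
        have h1 : c ≤ v * (1 - F v) / F v := hIT ⟨hv0, hFv⟩ ⟨hp, hFp⟩ hvp
        have h2 : v * (1 - F v) ≤ v := by nlinarith [hF0le v]
        have h3 : v * (1 - F v) / F v ≤ v / F v := by gcongr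
        have h4 : v / F v ≤ v / F 0 := by
          apply div_le_div_of_nonneg_left hv0.le hF0pos (hFmono hv0.le)
        have h5 : v / F 0 ≤ c / 2 := by
          rw [div_le_iff₀ hF0pos]
          calc v ≤ c * F 0 / 2 := min_le_right _ _
            _ = c / 2 * F 0 := by ring
        linarith
      -- key pointwise bound from the inscribed triangle property
      have hkey : ∀ x : ℝ, 0 ≤ x → x ≤ p → c * F x ≤ x * (1 - F x) := by
        intro x hx0 hxp
        rcases eq_or_lt_of_le (hF0le x) with hFx0 | hFx
        · rw [← hFx0, mul_zero]
          nlinarith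
        · have hx0' : 0 < x := by
            rcases hx0.lt_or_eq with h | h
            · exact h
            · exfalso; rw [← h, hF00] at hFx; exact lt_irrefl 0 hFx
          have h1 : c ≤ x * (1 - F x) / F x := hIT ⟨hx0', hFx⟩ ⟨hp, hFp⟩ hxp
          exact (le_div_iff₀ hFx).1 h1
      have hFmeas : Measurable F := hFmono.measurable
      -- the three regions
      set S1 : Set (ℝ×ℝ) := {z | z.1 ≤ z.2 ∧ z.1 ≤ p} with hS1
      set S2 : Set (ℝ×ℝ) := {z | z.2 < z.1 ∧ z.2 ≤ p} with hS2
      set S3 : Set (ℝ×ℝ) := Ioi p ×ˢ Ioi p with hS3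
      have hS1m : MeasurableSet S1 :=
        (measurableSet_le measurable_fst measurable_snd).inter
          (measurableSet_le measurable_fst measurable_const)
      have hS2m : MeasurableSet S2 :=
        (measurableSet_lt measurable_snd measurable_fst).inter
          (measurableSet_le measurable_snd measurable_const)
      have hS3m : MeasurableSet S3 := measurableSet_Ioi.prod measurableSet_Ioi
      -- integrability of the three pieces
      have ht1eq : S1.indicator (fun z : ℝ×ℝ => min z.1 z.2) = S1.indicator (fun z => z.1) :=
        indicator_congr fun z hz => min_eq_left hz.1
      have ht1int : Integrable (S1.indicator fun z : ℝ×ℝ => z.1) (μ.prod μ) :=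
        ht1eq ▸ hint.indicator hS1m
      have ht2eq : S2.indicator (fun z : ℝ×ℝ => min z.1 z.2) = S2.indicator (fun z => z.2) :=
        indicator_congr fun z hz => min_eq_right hz.1.le
      have ht2int : Integrable (S2.indicator fun z : ℝ×ℝ => z.2) (μ.prod μ) :=
        ht2eq ▸ hint.indicator hS2m
      have ht3int : Integrable (S3.indicator fun _ : ℝ×ℝ => p) (μ.prod μ) :=
        (integrable_const p).indicator hS3m
      -- pointwise bound by min
      have hptwise : ∀ x w : ℝ, 0 ≤ x → 0 ≤ w →
          S1.indicator (fun z : ℝ×ℝ => z.1) (x, w) + S2.indicator (fun z : ℝ×ℝ => z.2) (x, w)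
            + S3.indicator (fun _ : ℝ×ℝ => p) (x, w) ≤ min x w := by
        intro x w hx hw
        rcases le_total x w with h12 | h12
        · have hnot2 : (x, w) ∉ S2 := fun hm => absurd h12 (not_le.2 hm.1)
          rw [indicator_of_notMem hnot2]
          rcases le_or_gt x p with hxp | hxp
          · have hm1 : (x, w) ∈ S1 := ⟨h12, hxp⟩
            have hnot3 : (x, w) ∉ S3 := fun hm => absurd hxp (not_le.2 hm.1)
            rw [indicator_of_mem hm1, indicator_of_notMem hnot3, min_eq_left h12]
            linarith
          · have hnot1 : (x, w) ∉ S1 := fun hm => absurd hm.2 (not_le.2 hxp)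
            have hm3 : (x, w) ∈ S3 := ⟨hxp, lt_of_lt_of_le hxp h12⟩
            rw [indicator_of_notMem hnot1, indicator_of_mem hm3, min_eq_left h12]
            linarith
        · rcases lt_or_ge w x with h12' | h12'
          · have hnot1 : (x, w) ∉ S1 := fun hm => absurd h12' (not_lt.2 hm.1)
            rw [indicator_of_notMem hnot1]
            rcases le_or_gt w p with hwp | hwp
            · have hm2 : (x, w) ∈ S2 := ⟨h12', hwp⟩
              have hnot3 : (x, w) ∉ S3 := fun hm => absurd hwp (not_le.2 hm.2)
              rw [indicator_of_mem hm2, indicator_of_notMem hnot3, min_eq_right h12]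
              linarith
            · have hnot2 : (x, w) ∉ S2 := fun hm => absurd hm.2 (not_le.2 hwp)
              have hm3 : (x, w) ∈ S3 := ⟨lt_trans hwp h12', hwp⟩
              rw [indicator_of_notMem hnot2, indicator_of_mem hm3, min_eq_right h12]
              linarith
          · have hxw : x = w := le_antisymm h12' h12
            have hnot2 : (x, w) ∉ S2 := fun hm => absurd h12' (not_le.2 hm.1)
            rw [indicator_of_notMem hnot2]
            rcases le_or_gt x p with hxp | hxp
            · have hm1 : (x, w) ∈ S1 := ⟨h12', hxp⟩
              have hnot3 : (x, w) ∉ S3 := fun hm => absurd hxp (not_le.2 hm.1)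
              rw [indicator_of_mem hm1, indicator_of_notMem hnot3, min_eq_left h12']
              linarith
            · have hnot1 : (x, w) ∉ S1 := fun hm => absurd hm.2 (not_le.2 hxp)
              have hm3 : (x, w) ∈ S3 := ⟨hxp, hxw ▸ hxp⟩
              rw [indicator_of_notMem hnot1, indicator_of_mem hm3, min_eq_left h12']
              linarith
      -- the quantity I = ∫_{x ≤ p} F dμ
      set I := ∫ x, (if x ≤ p then F x else 0) ∂μ with hI
      have hIfun_meas : Measurable fun x : ℝ => if x ≤ p then F x else 0 :=
        Measurable.ite measurableSet_Iic hFmeas measurable_const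
      have hIint : Integrable (fun x : ℝ => if x ≤ p then F x else 0) μ := by
        refine (integrable_const (1:ℝ)).mono' hIfun_meas.aestronglyMeasurable ?_
        refine ae_of_all _ fun x => ?_
        rw [Real.norm_eq_abs]
        split_ifs with h
        · rw [abs_of_nonneg (hF0le x)]; exact hFle1 x
        · simp
      have hcIint : Integrable (fun x : ℝ => if x ≤ p then c * F x else 0) μ := by
        have : (fun x : ℝ => if x ≤ p then c * F x else 0)
            = fun x => c * (if x ≤ p then F x else 0) := by
          ext x; split_ifs <;> ring
        rw [this]; exact hIint.const_mul c
      -- lower bound for the S1-piece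
      have hT1 : c * I ≤ ∫ z, S1.indicator (fun z : ℝ×ℝ => z.1) z ∂(μ.prod μ) := by
        have hinner : ∀ x : ℝ, (∫ w, S1.indicator (fun z : ℝ×ℝ => z.1) (x, w) ∂μ)
            = if x ≤ p then x * (μ (Ici x)).toReal else 0 := by
          intro x
          by_cases hxp : x ≤ p
          · rw [if_pos hxp]
            have heq : (fun w => S1.indicator (fun z : ℝ×ℝ => z.1) (x, w))
                = (Ici x).indicator (fun _ => x) := by
              ext w
              by_cases hw : x ≤ w
              · rw [indicator_of_mem (show (x,w) ∈ S1 from ⟨hw, hxp⟩),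
                    indicator_of_mem (show w ∈ Ici x from hw)]
              · rw [indicator_of_notMem (fun hm => hw hm.1), indicator_of_notMem (show w ∉ Ici x from hw)]
            rw [heq, integral_indicator_const _ measurableSet_Ici, smul_eq_mul, mul_comm, measureReal_def]
          · rw [if_neg hxp]
            have heq : (fun w => S1.indicator (fun z : ℝ×ℝ => z.1) (x, w)) = fun _ => 0 := by
              ext w; exact indicator_of_notMem (fun hm => hxp hm.2) _
            rw [heq, integral_zero]
        have hrint : Integrable (fun x : ℝ => if x ≤ p then x * (μ (Ici x)).toReal else 0) μ := by
          have h := ht1int.integral_prod_left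
          refine h.congr (ae_of_all _ fun x => ?_)
          exact hinner x
        calc c * I = ∫ x, (if x ≤ p then c * F x else 0) ∂μ := by
              rw [hI, ← integral_const_mul]
              refine integral_congr_ae (ae_of_all _ fun x => ?_)
              simp only [mul_ite, mul_zero]
          _ ≤ ∫ x, (if x ≤ p then x * (μ (Ici x)).toReal else 0) ∂μ := by
              refine integral_mono_ae hcIint hrint ?_
              filter_upwards [hxae] with x hx
              split_ifs with hxp
              · have h1 : c * F x ≤ x * (1 - F x) := hkey x hx hxp
                have h2 : 1 - F x ≤ (μ (Ici x)).toReal := by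
                  rw [← hIoi x]
                  exact ENNReal.toReal_mono (measure_ne_top μ _)
                    (measure_mono Ioi_subset_Ici_self)
                nlinarith
              · exact le_rfl
          _ = ∫ x, ∫ w, S1.indicator (fun z : ℝ×ℝ => z.1) (x, w) ∂μ ∂μ := by
              refine integral_congr_ae (ae_of_all _ fun x => ?_)
              exact (hinner x).symm
          _ = ∫ z, S1.indicator (fun z : ℝ×ℝ => z.1) z ∂(μ.prod μ) :=
              (integral_prod _ ht1int).symm
      -- lower bound for the S2-piece
      have hT2 : c * I ≤ ∫ z, S2.indicator (fun z : ℝ×ℝ => z.2) z ∂(μ.prod μ) := by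
        have hinner : ∀ w : ℝ, (∫ x, S2.indicator (fun z : ℝ×ℝ => z.2) (x, w) ∂μ)
            = if w ≤ p then w * (μ (Ioi w)).toReal else 0 := by
          intro w
          by_cases hwp : w ≤ p
          · rw [if_pos hwp]
            have heq : (fun x => S2.indicator (fun z : ℝ×ℝ => z.2) (x, w))
                = (Ioi w).indicator (fun _ => w) := by
              ext x
              by_cases hx : w < x
              · rw [indicator_of_mem (show (x,w) ∈ S2 from ⟨hx, hwp⟩),
                    indicator_of_mem (show x ∈ Ioi w from hx)]
              · rw [indicator_of_notMem (fun hm => hx hm.1), indicator_of_notMem (show x ∉ Ioi w from hx)]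
            rw [heq, integral_indicator_const _ measurableSet_Ioi, smul_eq_mul, mul_comm, measureReal_def]
          · rw [if_neg hwp]
            have heq : (fun x => S2.indicator (fun z : ℝ×ℝ => z.2) (x, w)) = fun _ => 0 := by
              ext x; exact indicator_of_notMem (fun hm => hwp hm.2) _
            rw [heq, integral_zero]
        have hrint : Integrable (fun w : ℝ => if w ≤ p then w * (μ (Ioi w)).toReal else 0) μ := by
          have h := ht2int.integral_prod_right
          refine h.congr (ae_of_all _ fun w => ?_)
          exact hinner w
        calc c * I = ∫ w, (if w ≤ p then c * F w else 0) ∂μ := by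
              rw [hI, ← integral_const_mul]
              refine integral_congr_ae (ae_of_all _ fun x => ?_)
              simp only [mul_ite, mul_zero]
          _ ≤ ∫ w, (if w ≤ p then w * (μ (Ioi w)).toReal else 0) ∂μ := by
              refine integral_mono_ae hcIint hrint ?_
              filter_upwards [hxae] with w hw
              split_ifs with hwp
              · have h1 : c * F w ≤ w * (1 - F w) := hkey w hw hwp
                rw [hIoi w]; exact h1
              · exact le_rfl
          _ = ∫ w, ∫ x, S2.indicator (fun z : ℝ×ℝ => z.2) (x, w) ∂μ ∂μ := by
              refine integral_congr_ae (ae_of_all _ fun w => ?_)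
              exact (hinner w).symm
          _ = ∫ z, S2.indicator (fun z : ℝ×ℝ => z.2) z ∂(μ.prod μ) :=
              (integral_prod_symm _ ht2int).symm
      -- the S3-piece
      have hT3 : (∫ z, S3.indicator (fun _ : ℝ×ℝ => p) z ∂(μ.prod μ))
          = p * ((1 - F p) * (1 - F p)) := by
        rw [integral_indicator_const _ hS3m, measureReal_def, hS3, Measure.prod_prod, ENNReal.toReal_mul,
            hIoi, smul_eq_mul]
        ring
      -- symmetrization: 2 I ≥ F p ^ 2
      have h2I : F p * F p ≤ 2 * I := by
        set A : Set (ℝ×ℝ) := {z | z.2 ≤ z.1 ∧ z.1 ≤ p} with hA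
        set A' : Set (ℝ×ℝ) := {z | z.1 ≤ z.2 ∧ z.2 ≤ p} with hA'
        have hAm : MeasurableSet A :=
          (measurableSet_le measurable_snd measurable_fst).inter
            (measurableSet_le measurable_fst measurable_const)
        have hA'm : MeasurableSet A' :=
          (measurableSet_le measurable_fst measurable_snd).inter
            (measurableSet_le measurable_snd measurable_const)
        have hμIic_meas : Measurable fun x : ℝ => μ (Iic x) := by
          apply Monotone.measurable
          intro a b hab
          exact measure_mono (Iic_subset_Iic.2 hab)
        have hAval : (μ.prod μ) A = ∫⁻ x, (if x ≤ p then μ (Iic x) else 0) ∂μ := by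
          rw [Measure.prod_apply hAm]
          refine lintegral_congr fun x => ?_
          by_cases hxp : x ≤ p
          · rw [if_pos hxp]
            have : Prod.mk x ⁻¹' A = Iic x := by ext w; simp [hA, hxp]
            rw [this]
          · rw [if_neg hxp]
            have : Prod.mk x ⁻¹' A = ∅ := by ext w; simp [hA, hxp]
            rw [this, measure_empty]
        have hIA : I = ((μ.prod μ) A).toReal := by
          rw [hAval, ← integral_toReal
            (Measurable.ite measurableSet_Iic hμIic_meas measurable_const).aemeasurable
            (ae_of_all _ fun x => by split_ifs <;> simp [measure_lt_top])]
          refine integral_congr_ae (ae_of_all _ fun x => ?_)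
          simp only [apply_ite ENNReal.toReal, hcdf, ENNReal.toReal_zero]
        have hswap : (μ.prod μ) A' = (μ.prod μ) A := by
          conv_lhs => rw [← Measure.prod_swap]
          rw [Measure.map_apply measurable_swap hA'm]
          congr 1
        have hcover : (Iic p ×ˢ Iic p : Set (ℝ×ℝ)) ⊆ A ∪ A' := by
          rintro ⟨x, w⟩ ⟨hx, hw⟩
          rcases le_total w x with h | h
          · exact Or.inl ⟨h, hx⟩
          · exact Or.inr ⟨h, hw⟩
        have hcov2 : (μ.prod μ) (Iic p ×ˢ Iic p) ≤ 2 * (μ.prod μ) A := by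
          calc (μ.prod μ) (Iic p ×ˢ Iic p) ≤ (μ.prod μ) (A ∪ A') := measure_mono hcover
            _ ≤ (μ.prod μ) A + (μ.prod μ) A' := measure_union_le _ _
            _ = 2 * (μ.prod μ) A := by rw [hswap, two_mul]
        have hfin : 2 * (μ.prod μ) A ≠ ⊤ :=
          ENNReal.mul_ne_top (by norm_num) (measure_ne_top _ _)
        have := ENNReal.toReal_mono hfin hcov2
        rw [Measure.prod_prod, ENNReal.toReal_mul, hcdf, ENNReal.toReal_mul, ← hIA] at this
        simpa using this
      -- put everything together
      have hsum : p * (1 - F p) ≤ c * I + c * I + p * ((1 - F p) * (1 - F p)) := by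
        have h1 : c * (F p * F p) ≤ c * (2 * I) := by
          exact mul_le_mul_of_nonneg_left h2I hcpos.le
        have h2 : c * (F p * F p) = p * (1 - F p) * F p := by
          rw [hc]; field_simp
        have h3 : p * (1 - F p) = p * (1 - F p) * F p + p * ((1 - F p) * (1 - F p)) := by ring
        linarith
      calc p * (1 - F p)
          ≤ c * I + c * I + p * ((1 - F p) * (1 - F p)) := hsum
        _ ≤ (∫ z, S1.indicator (fun z : ℝ×ℝ => z.1) z ∂(μ.prod μ))
            + (∫ z, S2.indicator (fun z : ℝ×ℝ => z.2) z ∂(μ.prod μ))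
            + (∫ z, S3.indicator (fun _ : ℝ×ℝ => p) z ∂(μ.prod μ)) := by
              rw [hT3]
              exact add_le_add (add_le_add hT1 hT2) le_rfl
        _ = ∫ z, (S1.indicator (fun z : ℝ×ℝ => z.1) z + S2.indicator (fun z : ℝ×ℝ => z.2) z
              + S3.indicator (fun _ : ℝ×ℝ => p) z) ∂(μ.prod μ) := by
              have h1 := integral_add (ht1int.add ht2int) ht3int
              have h2 := integral_add ht1int ht2int
              simp only [Pi.add_apply] at h1 h2
              rw [h1, h2]
        _ ≤ ∫ z, min z.1 z.2 ∂(μ.prod μ) := by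
              refine integral_mono_ae ((ht1int.add ht2int).add ht3int) hint ?_
              filter_upwards [hzae] with z hz
              exact hptwise z.1 z.2 hz.1 hz.2
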